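/- Let $P_1, \ldots, P_r$ be orthogonal projections on a finite-dimensional Hilbert space and let $P_0 = \sum_{i=1}^r P_i$. Then $0 \le \sum_{i=1}^r (2P_i - P_0)_+ \le I$, i.e., the operators $(2P_i - P_0)_+$ form an (incomplete) POVM. -/

import Mathlib

open Matrix
open scoped ComplexOrder

noncomputable def matAbs {m : ℕ} (A : Matrix (Fin m) (Fin m) ℂ) : Matrix (Fin m) (Fin m) ℂ :=
  (Matrix.posSemidef_conjTranspose_mul_self A).1.eigenvectorUnitary.1 *
    diagonal ((↑) ∘ (Real.sqrt ∘ (Matrix.posSemidef_conjTranspose_mul_self A).1.eigenvalues)) *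
    (star (Matrix.posSemidef_conjTranspose_mul_self A).1.eigenvectorUnitary : Matrix (Fin m) (Fin m) ℂ)

noncomputable def traceNorm {m : ℕ} (A : Matrix (Fin m) (Fin m) ℂ) : ℝ :=
  ((matAbs A).trace).re

open Classical in
noncomputable def psdSqrt {m : ℕ} (A : Matrix (Fin m) (Fin m) ℂ) : Matrix (Fin m) (Fin m) ℂ :=
  if h : A.PosSemidef then h.1.eigenvectorUnitary.1 *
    diagonal ((↑) ∘ (Real.sqrt ∘ h.1.eigenvalues)) *
    (star h.1.eigenvectorUnitary : Matrix (Fin m) (Fin m) ℂ) else 0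

noncomputable def fid {m : ℕ} (A B : Matrix (Fin m) (Fin m) ℂ) : ℝ :=
  traceNorm (psdSqrt A * psdSqrt B)

noncomputable def matPosPart {m : ℕ} (A : Matrix (Fin m) (Fin m) ℂ) : Matrix (Fin m) (Fin m) ℂ :=
  (2⁻¹ : ℂ) • (matAbs A + A)

noncomputable def matNegPart {m : ℕ} (A : Matrix (Fin m) (Fin m) ℂ) : Matrix (Fin m) (Fin m) ℂ :=
  (2⁻¹ : ℂ) • (matAbs A - A)

/-! ### Auxiliary layer: conjugation of a real diagonal by a unitary -/

section CdLayer

variable {n : Type*} [Fintype n] [DecidableEq n]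

/-- Conjugation of a real diagonal matrix by a unitary. -/
noncomputable def cd (U : Matrix.unitaryGroup n ℂ) (f : n → ℝ) : Matrix n n ℂ :=
  (U : Matrix n n ℂ) * Matrix.diagonal (fun i => (f i : ℂ)) * star (U : Matrix n n ℂ)

lemma cd_spectral {X : Matrix n n ℂ} (hX : X.IsHermitian) :
    X = cd hX.eigenvectorUnitary hX.eigenvalues := hX.spectral_theorem

lemma star_mul_cancel (U : Matrix.unitaryGroup n ℂ) (M : Matrix n n ℂ) :
    star (U : Matrix n n ℂ) * ((U : Matrix n n ℂ) * M) = M := by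
  rw [← Matrix.mul_assoc, mem_unitaryGroup_iff'.mp U.2, Matrix.one_mul]

lemma cd_mul (U : Matrix.unitaryGroup n ℂ) (f g : n → ℝ) :
    cd U f * cd U g = cd U (fun i => f i * g i) := by
  have hdd : ∀ (a b : n → ℂ) (M : Matrix n n ℂ),
      Matrix.diagonal a * (Matrix.diagonal b * M) = Matrix.diagonal (fun i => a i * b i) * M := by
    intro a b M; rw [← Matrix.mul_assoc, Matrix.diagonal_mul_diagonal]
  simp only [cd, Matrix.mul_assoc, star_mul_cancel, hdd]
  norm_num [Complex.ofReal_mul]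

lemma cd_add (U : Matrix.unitaryGroup n ℂ) (f g : n → ℝ) :
    cd U f + cd U g = cd U (fun i => f i + g i) := by
  have : (Matrix.diagonal fun i => (f i : ℂ)) + (Matrix.diagonal fun i => (g i : ℂ))
      = Matrix.diagonal (fun i => ((f i + g i : ℝ) : ℂ)) := by
    rw [Matrix.diagonal_add]; norm_num
  simp only [cd, ← Matrix.add_mul, ← Matrix.mul_add, this]

lemma cd_sub (U : Matrix.unitaryGroup n ℂ) (f g : n → ℝ) :
    cd U f - cd U g = cd U (fun i => f i - g i) := by
  have : (Matrix.diagonal fun i => (f i : ℂ)) - (Matrix.diagonal fun i => (g i : ℂ))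
      = Matrix.diagonal (fun i => ((f i - g i : ℝ) : ℂ)) := by
    rw [Matrix.diagonal_sub]; norm_num
  simp only [cd, ← Matrix.sub_mul, ← Matrix.mul_sub, this]

lemma cd_smul (U : Matrix.unitaryGroup n ℂ) (c : ℝ) (f : n → ℝ) :
    (c : ℂ) • cd U f = cd U (fun i => c * f i) := by
  unfold cd
  have h : (c : ℂ) • Matrix.diagonal (fun i => (f i : ℂ))
      = Matrix.diagonal (fun i => ((c * f i : ℝ) : ℂ)) := by
    ext i j
    rcases eq_or_ne i j with rfl | hij
    · simp [Complex.ofReal_mul]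
    · simp [Matrix.diagonal_apply_ne _ hij]
  rw [← Matrix.smul_mul, ← Matrix.mul_smul, h]

lemma cd_one (U : Matrix.unitaryGroup n ℂ) : cd U (fun _ => 1) = 1 := by
  simp only [cd, Complex.ofReal_one, Matrix.diagonal_one, Matrix.mul_one]
  exact mem_unitaryGroup_iff.mp U.2

lemma cd_psd (U : Matrix.unitaryGroup n ℂ) {f : n → ℝ} (hf : ∀ i, 0 ≤ f i) :
    (cd U f).PosSemidef := by
  have : (Matrix.diagonal (fun i => (f i : ℂ))).PosSemidef :=
    Matrix.posSemidef_diagonal_iff.mpr fun i => by exact_mod_cast hf i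
  simpa only [cd, Matrix.star_eq_conjTranspose] using this.mul_mul_conjTranspose_same _

lemma cd_herm (U : Matrix.unitaryGroup n ℂ) (f : n → ℝ) : (cd U f).IsHermitian := by
  have hd : (Matrix.diagonal (fun i => (f i : ℂ))).IsHermitian := by
    rw [Matrix.IsHermitian, Matrix.diagonal_conjTranspose]
    have h2 : (star fun i => ((f i : ℂ))) = fun i => ((f i : ℂ)) := by
      funext i
      exact Complex.conj_ofReal _
    rw [h2]
  unfold cd
  rw [Matrix.star_eq_conjTranspose]
  exact Matrix.isHermitian_mul_mul_conjTranspose _ hd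

lemma cd_nonneg_of_psd (U : Matrix.unitaryGroup n ℂ) {f : n → ℝ}
    (h : (cd U f).PosSemidef) (i : n) : 0 ≤ f i := by
  have h2 := h.conjTranspose_mul_mul_same (U : Matrix n n ℂ)
  rw [← Matrix.star_eq_conjTranspose] at h2
  have h3 : star (U : Matrix n n ℂ) * cd U f * (U : Matrix n n ℂ)
      = Matrix.diagonal (fun i => (f i : ℂ)) := by
    simp only [cd, Matrix.mul_assoc, star_mul_cancel]
    rw [mem_unitaryGroup_iff'.mp U.2, Matrix.mul_one]
  rw [h3] at h2
  have := Matrix.posSemidef_diagonal_iff.mp h2 i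
  exact_mod_cast this

end CdLayer

/-! ### Monotonicity of the square root -/

lemma sub_psd_of_sq_sub_sq_psd {m : ℕ} {C D : Matrix (Fin m) (Fin m) ℂ}
    (hC : C.PosSemidef) (hD : D.PosSemidef) (h : (D ^ 2 - C ^ 2).PosSemidef) :
    (D - C).PosSemidef := by
  have hE : (D - C).IsHermitian := hD.1.sub hC.1
  apply hE.posSemidef_iff_eigenvalues_nonneg.mpr
  intro i
  by_contra hneg
  push_neg at hneg
  rw [Pi.zero_apply] at hneg
  set t := hE.eigenvalues i with ht
  set v := ⇑(hE.eigenvectorBasis i) with hv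
  have hv0 : v ≠ 0 := by
    rw [hv]; intro h0
    exact hE.eigenvectorBasis.orthonormal.ne_zero i (by ext j; exact congrFun h0 j)
  have hveq : (D - C) *ᵥ v = (t : ℂ) • v := by
    have := hE.mulVec_eigenvectorBasis i
    rw [← ht, ← hv] at this
    rw [this]
    funext j
    simp [Complex.real_smul]
  have hsplit : D ^ 2 - C ^ 2 = D * (D - C) + (D - C) * C := by noncomm_ring
  have key : star v ⬝ᵥ (D ^ 2 - C ^ 2) *ᵥ v
      = (t : ℂ) * (star v ⬝ᵥ D *ᵥ v + star v ⬝ᵥ C *ᵥ v) := by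
    rw [hsplit, Matrix.add_mulVec, dotProduct_add]
    have h1 : star v ⬝ᵥ (D * (D - C)) *ᵥ v = (t : ℂ) * (star v ⬝ᵥ D *ᵥ v) := by
      rw [← Matrix.mulVec_mulVec, hveq, Matrix.mulVec_smul, dotProduct_smul, smul_eq_mul]
    have h2 : star v ⬝ᵥ ((D - C) * C) *ᵥ v = (t : ℂ) * (star v ⬝ᵥ C *ᵥ v) := by
      rw [← Matrix.mulVec_mulVec, Matrix.dotProduct_mulVec, ← hE.eq, ← Matrix.star_mulVec,
        hveq]
      rw [star_smul, smul_dotProduct, smul_eq_mul, RCLike.star_def,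
        Complex.conj_ofReal]
    rw [h1, h2, mul_add]
  have ha : 0 ≤ star v ⬝ᵥ D *ᵥ v := hD.dotProduct_mulVec_nonneg v
  have hb : 0 ≤ star v ⬝ᵥ C *ᵥ v := hC.dotProduct_mulVec_nonneg v
  have hkey : 0 ≤ (t : ℂ) * (star v ⬝ᵥ D *ᵥ v + star v ⬝ᵥ C *ᵥ v) := key ▸ h.dotProduct_mulVec_nonneg v
  have hsum0 : star v ⬝ᵥ D *ᵥ v + star v ⬝ᵥ C *ᵥ v = 0 := by
    set w := star v ⬝ᵥ D *ᵥ v + star v ⬝ᵥ C *ᵥ v with hw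
    have hw0 : 0 ≤ w := add_nonneg ha hb
    rw [Complex.le_def] at hw0 hkey
    simp only [Complex.zero_re, Complex.zero_im, Complex.mul_re, Complex.mul_im,
      Complex.ofReal_re, Complex.ofReal_im] at hw0 hkey
    have hre : w.re = 0 := by nlinarith [hw0.1, hkey.1]
    apply Complex.ext
    · simpa using hre
    · simpa using hw0.2.symm
  have haz : star v ⬝ᵥ D *ᵥ v = 0 := by
    have h1 : star v ⬝ᵥ D *ᵥ v = -(star v ⬝ᵥ C *ᵥ v) := by linear_combination hsum0
    have h2 : star v ⬝ᵥ D *ᵥ v ≤ 0 := h1 ▸ neg_nonpos_of_nonneg hb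
    exact le_antisymm h2 ha
  have hbz : star v ⬝ᵥ C *ᵥ v = 0 := by linear_combination hsum0 - haz
  have hDv : D *ᵥ v = 0 := (hD.dotProduct_mulVec_zero_iff v).mp haz
  have hCv : C *ᵥ v = 0 := (hC.dotProduct_mulVec_zero_iff v).mp hbz
  have : (t : ℂ) • v = 0 := by
    rw [← hveq, Matrix.sub_mulVec, hDv, hCv, sub_zero]
  rcases smul_eq_zero.mp this with h' | h'
  · exact absurd (Complex.ofReal_eq_zero.mp h') (ne_of_lt hneg)
  · exact hv0 h'

lemma psd_antisymm {m : ℕ} {A : Matrix (Fin m) (Fin m) ℂ} (h1 : A.PosSemidef)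
    (h2 : (-A).PosSemidef) : A = 0 := by
  have t1 := h1.trace_nonneg
  have t2 := h2.trace_nonneg
  rw [Matrix.trace_neg] at t2
  exact h1.trace_eq_zero_iff.mp (le_antisymm (neg_nonneg.mp t2) t1)

lemma matAbs_cd {m : ℕ} (A : Matrix (Fin m) (Fin m) ℂ) :
    matAbs A = cd (Matrix.posSemidef_conjTranspose_mul_self A).1.eigenvectorUnitary
      (fun i => Real.sqrt ((Matrix.posSemidef_conjTranspose_mul_self A).1.eigenvalues i)) := rfl

lemma matAbs_psd {m : ℕ} (A : Matrix (Fin m) (Fin m) ℂ) : (matAbs A).PosSemidef := by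
  rw [matAbs_cd]; exact cd_psd _ (fun i => Real.sqrt_nonneg _)

lemma matAbs_sq {m : ℕ} (A : Matrix (Fin m) (Fin m) ℂ) : matAbs A ^ 2 = Aᴴ * A := by
  rw [matAbs_cd, pow_two, cd_mul]
  have e : (fun i => Real.sqrt ((Matrix.posSemidef_conjTranspose_mul_self A).1.eigenvalues i) *
      Real.sqrt ((Matrix.posSemidef_conjTranspose_mul_self A).1.eigenvalues i))
      = (Matrix.posSemidef_conjTranspose_mul_self A).1.eigenvalues := funext fun i =>
    Real.mul_self_sqrt ((Matrix.posSemidef_conjTranspose_mul_self A).eigenvalues_nonneg i)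
  rw [e]
  exact (cd_spectral _).symm

/-! ### Facts about `matAbs` and `matPosPart` -/

lemma matAbs_eq {m : ℕ} {X : Matrix (Fin m) (Fin m) ℂ} (hX : X.IsHermitian) :
    matAbs X = cd hX.eigenvectorUnitary (fun i => |hX.eigenvalues i|) := by
  have hBpsd : (cd hX.eigenvectorUnitary (fun i => |hX.eigenvalues i|)).PosSemidef :=
    cd_psd _ (fun i => abs_nonneg _)
  have hB2 : (cd hX.eigenvectorUnitary (fun i => |hX.eigenvalues i|)) ^ 2 = Xᴴ * X := by
    rw [pow_two, cd_mul]
    have h1 : (fun i => |hX.eigenvalues i| * |hX.eigenvalues i|)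
        = fun i => hX.eigenvalues i * hX.eigenvalues i := by
      funext i; exact abs_mul_abs_self _
    rw [h1, ← cd_mul, ← cd_spectral hX, hX.eq]
  have h1 := sub_psd_of_sq_sub_sq_psd (matAbs_psd X) hBpsd
    (by rw [hB2, matAbs_sq, sub_self]; exact Matrix.PosSemidef.zero)
  have h2 := sub_psd_of_sq_sub_sq_psd hBpsd (matAbs_psd X)
    (by rw [hB2, matAbs_sq, sub_self]; exact Matrix.PosSemidef.zero)
  rw [← neg_sub] at h2
  exact (sub_eq_zero.mp (psd_antisymm h1 h2)).symm

lemma psd_sum' {m r : ℕ} (F : Fin r → Matrix (Fin m) (Fin m) ℂ)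
    (h : ∀ i, (F i).PosSemidef) : (∑ i, F i).PosSemidef :=
  Finset.sum_induction F Matrix.PosSemidef (fun _ _ ha hb => ha.add hb)
    Matrix.PosSemidef.zero (fun i _ => h i)

lemma psd_smul' {m : ℕ} {A : Matrix (Fin m) (Fin m) ℂ} (hA : A.PosSemidef) {c : ℝ}
    (hc : 0 ≤ c) : ((c : ℂ) • A).PosSemidef := by
  refine Matrix.PosSemidef.of_dotProduct_mulVec_nonneg ?_ ?_
  · unfold Matrix.IsHermitian
    rw [Matrix.conjTranspose_smul, hA.1.eq]
    congr 1
    exact Complex.conj_ofReal c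
  · intro x
    rw [Matrix.smul_mulVec, dotProduct_smul]
    exact mul_nonneg (by exact_mod_cast hc) (hA.dotProduct_mulVec_nonneg x)

lemma matPosPart_eq {m : ℕ} {X : Matrix (Fin m) (Fin m) ℂ} (hX : X.IsHermitian) :
    matPosPart X = cd hX.eigenvectorUnitary
      (fun i => 2⁻¹ * (|hX.eigenvalues i| + hX.eigenvalues i)) := by
  rw [matPosPart, matAbs_eq hX]
  have h1 : cd hX.eigenvectorUnitary (fun i => 2⁻¹ * (|hX.eigenvalues i| + hX.eigenvalues i))
      = (2⁻¹ : ℂ) • (cd hX.eigenvectorUnitary (fun i => |hX.eigenvalues i|)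
        + cd hX.eigenvectorUnitary hX.eigenvalues) := by
    rw [cd_add, show ((2⁻¹ : ℂ)) = (((2⁻¹ : ℝ) : ℂ)) by norm_num, cd_smul]
  rw [h1, ← cd_spectral hX]

lemma matPosPart_psd {m : ℕ} {X : Matrix (Fin m) (Fin m) ℂ} (hX : X.IsHermitian) :
    (matPosPart X).PosSemidef := by
  rw [matPosPart_eq hX]
  refine cd_psd _ (fun i => ?_)
  have h := neg_abs_le (hX.eigenvalues i)
  nlinarith [abs_nonneg (hX.eigenvalues i)]

lemma herm_sq_psd {m : ℕ} {X : Matrix (Fin m) (Fin m) ℂ} (hX : X.IsHermitian) :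
    (X ^ 2).PosSemidef := by
  have : X ^ 2 = Xᴴ * X := by rw [pow_two, hX.eq]
  exact this ▸ Matrix.posSemidef_conjTranspose_mul_self X

/-! ### Operator Cauchy–Schwarz: `(∑ B)² ≤ r ∑ B²` -/

lemma cauchy_schwarz_sum {m r : ℕ} (B : Fin r → Matrix (Fin m) (Fin m) ℂ)
    (hB : ∀ i, (B i).IsHermitian) :
    ((r : ℂ) • (∑ i, (B i) ^ 2) - (∑ i, B i) ^ 2).PosSemidef := by
  have expand : ∀ i j, (B i - B j) ^ 2
      = ((B i) ^ 2 + (B j) ^ 2) - (B i * B j + B j * B i) := by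
    intro i j; noncomm_ring
  have hsum : ∑ i, ∑ j, (B i - B j) ^ 2
      = (r • (∑ i, (B i) ^ 2) + r • (∑ i, (B i) ^ 2))
        - ((∑ i, B i) * (∑ i, B i) + (∑ i, B i) * (∑ i, B i)) := by
    simp_rw [expand, Finset.sum_sub_distrib, Finset.sum_add_distrib, Finset.sum_const,
      Finset.card_univ, Fintype.card_fin, ← Finset.sum_mul]
    rw [← Finset.mul_sum, ← Finset.smul_sum, ← Finset.sum_mul_sum]
  have hkey : (r : ℂ) • (∑ i, (B i) ^ 2) - (∑ i, B i) ^ 2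
      = (2⁻¹ : ℂ) • ∑ i, ∑ j, (B i - B j) ^ 2 := by
    rw [hsum, Nat.cast_smul_eq_nsmul ℂ r, pow_two]
    generalize (∑ i, (B i) ^ 2) = X
    generalize (∑ i, B i) = Y
    rw [smul_sub, smul_add, smul_add]
    rw [← Nat.cast_smul_eq_nsmul ℂ r X]
    match_scalars <;> push_cast <;> ring
  rw [hkey, show ((2⁻¹ : ℂ)) = (((2⁻¹ : ℝ) : ℂ)) by norm_num]
  refine psd_smul' ?_ (by norm_num)
  exact psd_sum' _ (fun i => psd_sum' _ (fun j => herm_sq_psd ((hB i).sub (hB j))))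

/-! ### The scalar inequality -/

lemma scalar_key {r μ : ℝ} (hr : 0 ≤ r) (hμ : 0 ≤ μ)
    (hm : 0 ≤ 4 * μ + (r - 4) * (μ * μ)) :
    Real.sqrt (r * (4 * μ + (r - 4) * (μ * μ))) ≤ 2 + (r - 2) * μ := by
  have h2 : 0 ≤ 2 + (r - 2) * μ := by
    rcases le_or_gt 2 r with h | h
    · nlinarith
    · nlinarith [mul_nonneg hμ hμ, mul_nonneg (mul_nonneg hμ hμ) hμ, mul_nonneg hm hμ,
        mul_nonneg hm hr, sq_nonneg (2 - (2 - r) * μ)]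
  have hle : r * (4 * μ + (r - 4) * (μ * μ)) ≤ (2 + (r - 2) * μ) ^ 2 := by
    nlinarith [sq_nonneg (1 - μ)]
  have := Real.sqrt_le_sqrt hle
  rwa [Real.sqrt_sq h2] at this

/-! ### Main theorem -/

theorem posPart_projections_povm {d r : ℕ} (P : Fin r → Matrix (Fin d) (Fin d) ℂ)
    (hP : ∀ i, (P i).IsHermitian) (hP2 : ∀ i, P i * P i = P i) :
    (∑ i, matPosPart (2 • P i - ∑ j, P j)).PosSemidef ∧
    (1 - ∑ i, matPosPart (2 • P i - ∑ j, P j)).PosSemidef := by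
  classical
  set T : Matrix (Fin d) (Fin d) ℂ := ∑ j, P j with hTdef
  have hPpsd : ∀ i, (P i).PosSemidef := fun i => by
    have h1 : (P i)ᴴ * P i = P i := by rw [(hP i).eq, hP2 i]
    exact h1 ▸ Matrix.posSemidef_conjTranspose_mul_self (P i)
  have hT : T.PosSemidef := psd_sum' P hPpsd
  have hAherm : ∀ i, (2 • P i - T).IsHermitian := fun i => by
    rw [two_smul ℕ (P i)]
    exact ((hP i).add (hP i)).sub hT.1
  refine ⟨psd_sum' _ (fun i => matPosPart_psd (hAherm i)), ?_⟩
  set U := hT.1.eigenvectorUnitary with hU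
  set μ := hT.1.eigenvalues with hμdef
  have hμ0 : ∀ i, 0 ≤ μ i := fun i => hT.eigenvalues_nonneg i
  have hTcd : T = cd U μ := cd_spectral hT.1
  have hTT : T * T = cd U (fun i => μ i * μ i) := by rw [hTcd, cd_mul]
  have hterm : ∀ i, (2 • P i - T) ^ 2
      = P i + P i + P i + P i - (P i * T) - (P i * T) - (T * P i) - (T * P i) + T * T := by
    intro i
    rw [two_smul ℕ (P i)]
    have expand : (P i + P i - T) ^ 2
        = P i * P i + P i * P i + P i * P i + P i * P i
          - (P i * T) - (P i * T) - (T * P i) - (T * P i) + T * T := by noncomm_ring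
    rw [expand, hP2 i]
  have hPT : ∑ i, P i * T = T * T := by rw [← Finset.sum_mul, ← hTdef]
  have hTP : ∑ i, T * P i = T * T := by rw [← Finset.mul_sum, ← hTdef]
  have hM : ∑ i, (2 • P i - T) ^ 2 = (4 : ℂ) • T + ((r : ℂ) - 4) • (T * T) := by
    simp_rw [hterm]
    rw [Finset.sum_add_distrib, Finset.sum_sub_distrib, Finset.sum_sub_distrib,
      Finset.sum_sub_distrib, Finset.sum_sub_distrib, Finset.sum_add_distrib,
      Finset.sum_add_distrib, Finset.sum_add_distrib, hPT, hTP,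
      Finset.sum_const, Finset.card_univ, Fintype.card_fin, ← hTdef]
    rw [← Nat.cast_smul_eq_nsmul ℂ r (T * T)]
    match_scalars <;> push_cast <;> ring
  have hMpsd : (∑ i, (2 • P i - T) ^ 2).PosSemidef :=
    psd_sum' _ (fun i => herm_sq_psd (hAherm i))
  have hMcd : ∑ i, (2 • P i - T) ^ 2
      = cd U (fun i => 4 * μ i + ((r : ℝ) - 4) * (μ i * μ i)) := by
    have e : cd U (fun i => 4 * μ i + ((r : ℝ) - 4) * (μ i * μ i))
        = (((4:ℝ)):ℂ) • cd U μ + (((((r:ℝ) - 4) : ℝ)):ℂ) • cd U (fun i => μ i * μ i) := by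
      rw [cd_smul, cd_smul, cd_add]
    rw [hM, hTT, hTcd, e]
    match_scalars <;> push_cast <;> ring
  have hmnn : ∀ i, 0 ≤ 4 * μ i + ((r : ℝ) - 4) * (μ i * μ i) :=
    cd_nonneg_of_psd U (hMcd ▸ hMpsd)
  set s : Fin d → ℝ :=
    fun i => Real.sqrt ((r : ℝ) * (4 * μ i + ((r : ℝ) - 4) * (μ i * μ i))) with hsdef
  have hSpsd : (cd U s).PosSemidef := cd_psd U (fun i => Real.sqrt_nonneg _)
  have hS2 : (cd U s) ^ 2 = (r : ℂ) • ∑ i, (2 • P i - T) ^ 2 := by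
    have e : (fun i => s i * s i)
        = fun i => (r : ℝ) * (4 * μ i + ((r : ℝ) - 4) * (μ i * μ i)) := by
      funext i
      exact Real.mul_self_sqrt (mul_nonneg (Nat.cast_nonneg r) (hmnn i))
    rw [pow_two, cd_mul, e, hMcd, show ((r:ℂ)) = (((r:ℝ)):ℂ) by norm_num, cd_smul]
  have hYpsd : (∑ i, matAbs (2 • P i - T)).PosSemidef :=
    psd_sum' _ (fun _ => matAbs_psd _)
  have habs2 : ∀ i : Fin r, (matAbs (2 • P i - T)) ^ 2 = (2 • P i - T) ^ 2 := fun i => by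
    rw [matAbs_sq, (hAherm i).eq, pow_two]
  have hCS := cauchy_schwarz_sum (fun i => matAbs (2 • P i - T))
    (fun _ => (matAbs_psd _).1)
  simp_rw [habs2] at hCS
  have hSY : (cd U s - ∑ i, matAbs (2 • P i - T)).PosSemidef := by
    apply sub_psd_of_sq_sub_sq_psd hYpsd hSpsd
    rw [hS2]
    exact hCS
  have hfin : (1 - (2⁻¹ : ℂ) • (((2:ℂ) - (r:ℂ)) • T + cd U s)).PosSemidef := by
    have e1 : ((2:ℂ) - (r:ℂ)) • T = cd U (fun i => (2 - (r:ℝ)) * μ i) := by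
      rw [hTcd, show ((2:ℂ) - (r:ℂ)) = (((2 - (r:ℝ) : ℝ)):ℂ) by push_cast; ring, cd_smul]
    rw [e1, cd_add, show ((2⁻¹:ℂ)) = (((2⁻¹:ℝ)):ℂ) by norm_num, cd_smul, ← cd_one U, cd_sub]
    refine cd_psd U (fun i => ?_)
    have hkey := scalar_key (r := (r:ℝ)) (μ := μ i) (Nat.cast_nonneg r) (hμ0 i) (hmnn i)
    have hs : s i = Real.sqrt ((r : ℝ) * (4 * μ i + ((r : ℝ) - 4) * (μ i * μ i))) := by
      rw [hsdef]
    rw [hs] at *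
    nlinarith [hkey]
  have hQ : ∑ i, matPosPart (2 • P i - T)
      = (2⁻¹ : ℂ) • ((∑ i, matAbs (2 • P i - T)) + ∑ i, (2 • P i - T)) := by
    simp only [matPosPart]
    rw [← Finset.smul_sum, Finset.sum_add_distrib]
  have hsumA : ∑ i, (2 • P i - T) = ((2:ℂ) - (r:ℂ)) • T := by
    rw [Finset.sum_sub_distrib, ← Finset.smul_sum, ← hTdef, Finset.sum_const,
      Finset.card_univ, Fintype.card_fin, ← Nat.cast_smul_eq_nsmul ℂ 2 T,
      ← Nat.cast_smul_eq_nsmul ℂ r T]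
    match_scalars <;> push_cast <;> ring
  have hsplit : 1 - ∑ i, matPosPart (2 • P i - T)
      = (2⁻¹ : ℂ) • (cd U s - ∑ i, matAbs (2 • P i - T))
        + (1 - (2⁻¹ : ℂ) • (((2:ℂ) - (r:ℂ)) • T + cd U s)) := by
    rw [hQ, hsumA]
    generalize (∑ i, matAbs (2 • P i - T)) = Y
    generalize (cd U s) = S
    module
  rw [hsplit]
  have hpart := psd_smul' hSY (show (0:ℝ) ≤ 2⁻¹ by norm_num)
  rw [show (((2⁻¹:ℝ)):ℂ) = ((2⁻¹:ℂ)) by norm_num] at hpart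
  exact hpart.add hfin
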